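/- Let f : X × S → Y be a two-universal hash function family, X a random variable over X, S uniform on S and independent of X, U uniform on Y and independent of S. If H_∞(X) − 2log(1/ε) ≥ log|Y|, then (1/2)‖(f(S,X), S) − (U, S)‖₁ ≤ ε. -/

import Mathlib

open Finset

/- Leftover hash lemma: if `f : X × S → Y` is a two-universal hash function,
`X` has min-entropy `H_∞(X) = -log max_x P_X(x)` satisfying
`H_∞(X) - 2log(1/ε) ≥ log|Y|`, `S` is an independent uniform seed and `U` is
uniform on `Y`, then `(f(S,X), S)` is ε-close to `(U, S)` in statistical
distance. -/
open Classical in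
theorem leftover_hash_lemma {X S Y : Type*} [Fintype X] [Fintype S] [Fintype Y]
    (f : X → S → Y)
    (huniv : ∀ x₀ x₁ : X, x₀ ≠ x₁ →
      ((univ.filter (fun s => f x₀ s = f x₁ s)).card : ℝ) / (Fintype.card S : ℝ)
        ≤ 1 / (Fintype.card Y : ℝ))
    (PX : X → ℝ) (hPX0 : ∀ x, 0 ≤ PX x) (hPX1 : ∑ x, PX x = 1)
    (ε : ℝ) (hε : 0 < ε)
    (hmin : Real.logb 2 (Fintype.card Y)
      ≤ (- Real.logb 2 (⨆ x, PX x)) - 2 * Real.logb 2 (1 / ε)) :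
    (1 / 2) * ∑ y : Y, ∑ s : S,
        |(1 / (Fintype.card S : ℝ)) * (∑ x ∈ univ.filter (fun x => f x s = y), PX x)
          - (1 / (Fintype.card Y : ℝ)) * (1 / (Fintype.card S : ℝ))| ≤ ε := by
  rcases isEmpty_or_nonempty Y with hY | hY
  · simp only [univ_eq_empty, Finset.sum_empty, mul_zero]
    linarith
  rcases isEmpty_or_nonempty S with hS | hS
  · simp only [univ_eq_empty, Finset.sum_empty, Finset.sum_const_zero, mul_zero]
    linarith
  have hXne : Nonempty X := by
    by_contra h
    rw [not_nonempty_iff] at h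
    simp [univ_eq_empty] at hPX1
  have nSpos : (0:ℝ) < Fintype.card S := by
    exact_mod_cast Fintype.card_pos
  have nYpos : (0:ℝ) < Fintype.card Y := by
    exact_mod_cast Fintype.card_pos
  set nS : ℝ := (Fintype.card S : ℝ) with hnS
  set nY : ℝ := (Fintype.card Y : ℝ) with hnY
  set M : ℝ := ⨆ x, PX x with hMdef
  have hbdd : ∀ x, PX x ≤ M := fun x =>
    le_ciSup (Set.Finite.bddAbove (Set.finite_range PX)) x
  obtain ⟨x₀, hx₀⟩ : ∃ x, 0 < PX x := by
    by_contra h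
    push_neg at h
    have : ∑ x, PX x ≤ 0 := Finset.sum_nonpos fun x _ => h x
    linarith
  have hMpos : 0 < M := lt_of_lt_of_le hx₀ (hbdd x₀)
  -- key numeric bound from min-entropy hypothesis
  have hkey : nY * M ≤ ε ^ 2 := by
    have h1 : Real.logb 2 (nY * M) ≤ Real.logb 2 (ε ^ 2) := by
      rw [Real.logb_mul (ne_of_gt nYpos) (ne_of_gt hMpos), Real.logb_pow]
      have h2 : Real.logb 2 (1 / ε) = - Real.logb 2 ε := by
        rw [one_div, Real.logb_inv]
      rw [h2] at hmin
      push_cast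
      linarith
    exact (Real.logb_le_logb one_lt_two (by positivity) (by positivity)).mp h1
  -- the joint distribution
  set P : Y × S → ℝ := fun z =>
    1 / nS * ∑ x ∈ univ.filter (fun x => f x z.2 = z.1), PX x with hP
  set q : ℝ := 1 / nY * (1 / nS) with hq
  have hgoal : (∑ y : Y, ∑ s : S,
        |(1 / nS) * (∑ x ∈ univ.filter (fun x => f x s = y), PX x)
          - (1 / nY) * (1 / nS)|) = ∑ z : Y × S, |P z - q| := by
    rw [Fintype.sum_prod_type]
  rw [hgoal]
  -- total mass is 1
  have hA : ∑ z : Y × S, P z = 1 := by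
    rw [Fintype.sum_prod_type, Finset.sum_comm]
    have : ∀ s : S, ∑ y : Y, P (y, s) = 1 / nS := by
      intro s
      rw [hP]
      simp only
      rw [← Finset.mul_sum, Finset.sum_fiberwise univ (fun x => f x s) PX, hPX1, mul_one]
    rw [Finset.sum_congr rfl fun s _ => this s, Finset.sum_const, nsmul_eq_mul,
      Finset.card_univ]
    field_simp
    exact hnS.symm
  -- collision bound
  have hsumsq : ∑ x : X, PX x * PX x ≤ M := by
    calc ∑ x : X, PX x * PX x ≤ ∑ x : X, M * PX x :=
          Finset.sum_le_sum fun x _ => mul_le_mul_of_nonneg_right (hbdd x) (hPX0 x)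
      _ = M := by rw [← Finset.mul_sum, hPX1, mul_one]
  have step1 : ∀ s : S, ∑ y : Y, (∑ x ∈ univ.filter (fun x => f x s = y), PX x) ^ 2
      = ∑ a : X, ∑ b : X, if f a s = f b s then PX a * PX b else 0 := by
    intro s
    simp only [Finset.sum_filter, sq, Finset.sum_mul_sum]
    rw [Finset.sum_comm]
    refine Finset.sum_congr rfl fun a _ => ?_
    rw [Finset.sum_comm]
    refine Finset.sum_congr rfl fun b _ => ?_
    simp only [ite_mul, zero_mul, mul_ite, mul_zero]
    rw [Finset.sum_ite_eq univ (f b s) (fun y => if f a s = y then PX a * PX b else 0)]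
    simp only [Finset.mem_univ, if_true]
  have step2 : ∑ s : S, ∑ a : X, ∑ b : X, (if f a s = f b s then PX a * PX b else 0)
      = ∑ a : X, ∑ b : X, ((univ.filter fun s => f a s = f b s).card : ℝ) * (PX a * PX b) := by
    rw [Finset.sum_comm]
    refine Finset.sum_congr rfl fun a _ => ?_
    rw [Finset.sum_comm]
    refine Finset.sum_congr rfl fun b _ => ?_
    rw [← Finset.sum_filter, Finset.sum_const, nsmul_eq_mul]
  have step3 : ∀ a b : X, ((univ.filter fun s => f a s = f b s).card : ℝ) * (PX a * PX b)
      ≤ ((if a = b then nS else 0) + nS / nY) * (PX a * PX b) := by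
    intro a b
    refine mul_le_mul_of_nonneg_right ?_ (mul_nonneg (hPX0 _) (hPX0 _))
    by_cases h : a = b
    · have h1 : ((univ.filter fun s => f a s = f b s).card : ℝ) ≤ nS := by
        rw [hnS, ← Finset.card_univ]
        exact_mod_cast Finset.card_le_card (Finset.filter_subset _ _)
      have h2 : 0 ≤ nS / nY := by positivity
      rw [if_pos h]
      linarith
    · have h1 := huniv a b h
      rw [div_le_div_iff₀ nSpos nYpos] at h1
      simp only [h, if_false, zero_add]
      rw [le_div_iff₀ nYpos]
      linarith
  have expand : ∑ a : X, ∑ b : X, ((if a = b then nS else 0) + nS / nY) * (PX a * PX b)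
      = nS * (∑ x : X, PX x * PX x) + nS / nY := by
    simp only [add_mul, Finset.sum_add_distrib, ite_mul, zero_mul]
    congr 1
    · rw [Finset.mul_sum]
      refine Finset.sum_congr rfl fun a _ => ?_
      rw [Finset.sum_ite_eq univ a (fun b => nS * (PX a * PX b))]
      simp
    · have : ∀ a : X, ∑ b : X, nS / nY * (PX a * PX b) = nS / nY * PX a := by
        intro a
        rw [← Finset.mul_sum, ← Finset.mul_sum, hPX1, mul_one]
      rw [Finset.sum_congr rfl fun a _ => this a, ← Finset.mul_sum, hPX1, mul_one]
  have hB : ∑ z : Y × S, (P z) ^ 2 ≤ 1 / nS * (M + 1 / nY) := by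
    rw [Fintype.sum_prod_type, Finset.sum_comm]
    have hre : ∀ s : S, ∑ y : Y, P (y, s) ^ 2
        = (1 / nS) ^ 2 * ∑ y : Y, (∑ x ∈ univ.filter (fun x => f x s = y), PX x) ^ 2 := by
      intro s
      rw [Finset.mul_sum]
      refine Finset.sum_congr rfl fun y _ => ?_
      rw [hP]
      ring
    rw [Finset.sum_congr rfl fun s _ => hre s, ← Finset.mul_sum]
    calc (1 / nS) ^ 2 * ∑ s : S, ∑ y : Y, (∑ x ∈ univ.filter (fun x => f x s = y), PX x) ^ 2
        = (1 / nS) ^ 2 * ∑ s : S, ∑ a : X, ∑ b : X, (if f a s = f b s then PX a * PX b else 0) := by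
          rw [Finset.sum_congr rfl fun s _ => step1 s]
      _ ≤ (1 / nS) ^ 2 * (nS * M + nS / nY) := by
          refine mul_le_mul_of_nonneg_left ?_ (by positivity)
          rw [step2]
          calc ∑ a : X, ∑ b : X, ((univ.filter fun s => f a s = f b s).card : ℝ) * (PX a * PX b)
              ≤ ∑ a : X, ∑ b : X, ((if a = b then nS else 0) + nS / nY) * (PX a * PX b) :=
                Finset.sum_le_sum fun a _ => Finset.sum_le_sum fun b _ => step3 a b
            _ = nS * (∑ x : X, PX x * PX x) + nS / nY := expand
            _ ≤ nS * M + nS / nY := by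
                have := mul_le_mul_of_nonneg_left hsumsq (le_of_lt nSpos)
                linarith
      _ = 1 / nS * (M + 1 / nY) := by field_simp
  -- sum of squared deviations
  have hE : ∑ z : Y × S, (P z - q) ^ 2
      = (∑ z : Y × S, (P z) ^ 2) - 2 * q * (∑ z : Y × S, P z) + (nY * nS) * q ^ 2 := by
    have hterm : ∀ z : Y × S, (P z - q) ^ 2 = (P z) ^ 2 - (2 * q) * P z + q ^ 2 :=
      fun z => by ring
    rw [Finset.sum_congr rfl fun z _ => hterm z]
    rw [Finset.sum_add_distrib, Finset.sum_sub_distrib, ← Finset.mul_sum,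
      Finset.sum_const, Finset.card_univ, Fintype.card_prod, nsmul_eq_mul]
    push_cast
    ring
  have hEbound : ∑ z : Y × S, (P z - q) ^ 2 ≤ M / nS := by
    rw [hE, hA, hq]
    have : (nY * nS) * (1 / nY * (1 / nS)) ^ 2 = 1 / nY * (1 / nS) := by
      field_simp
    rw [this]
    have h3 : 1 / nS * (M + 1 / nY) - 2 * (1 / nY * (1 / nS)) * 1 + 1 / nY * (1 / nS)
        = M / nS := by field_simp; ring
    linarith [hB]
  -- Cauchy–Schwarz
  have hCS : (∑ z : Y × S, |P z - q|) ^ 2 ≤ (nY * nS) * ∑ z : Y × S, (P z - q) ^ 2 := by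
    have := sq_sum_le_card_mul_sum_sq (s := (univ : Finset (Y × S)))
      (f := fun z => |P z - q|)
    simp only [sq_abs, Finset.card_univ, Fintype.card_prod] at this
    calc (∑ z : Y × S, |P z - q|) ^ 2
        ≤ (Fintype.card Y * Fintype.card S : ℕ) * ∑ z : Y × S, (P z - q) ^ 2 := this
      _ = (nY * nS) * ∑ z : Y × S, (P z - q) ^ 2 := by push_cast; ring
  have hfin : (∑ z : Y × S, |P z - q|) ^ 2 ≤ ε ^ 2 := by
    calc (∑ z : Y × S, |P z - q|) ^ 2 ≤ (nY * nS) * (M / nS) := by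
          refine le_trans hCS (mul_le_mul_of_nonneg_left hEbound (by positivity))
      _ = nY * M := by field_simp
      _ ≤ ε ^ 2 := hkey
  have hnn : 0 ≤ ∑ z : Y × S, |P z - q| := Finset.sum_nonneg fun z _ => abs_nonneg _
  have hle : ∑ z : Y × S, |P z - q| ≤ ε := by
    nlinarith [hfin, hnn, hε]
  linarith
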